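/- If κ is an uncountable cardinal with cofinality ω, then every cofinal family F in [κ]^ω has cardinality at least κ⁺ (the successor cardinal of κ). -/

import Mathlib

open Cardinal Set

/-- If κ is an uncountable cardinal of cofinality ω, then every cofinal family in
[κ]^ω has cardinality at least κ⁺. Here κ is realized as the cardinality of a type α. -/
theorem stmt_1 {α : Type*} (hκ : ℵ₀ < #α) (hcf : (#α).ord.cof = ℵ₀)
    (F : Set (Set α))
    (hF : ∀ Y ∈ F, Y.Countable ∧ Y.Infinite)
    (hcof : ∀ X : Set α, X.Countable → X.Infinite → ∃ Y ∈ F, X ⊆ Y) :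
    Order.succ (#α) ≤ #F := by
  classical
  rw [Order.succ_le_iff]
  by_contra h
  push_neg at h
  -- F is nonempty
  haveI : Infinite α := Cardinal.infinite_iff.mpr hκ.le
  obtain ⟨Y0, hY0, -⟩ := hcof (Set.range (Infinite.natEmbedding α))
    (Set.countable_range _) (Set.infinite_range_of_injective (Infinite.natEmbedding α).injective)
  haveI : Nonempty ↥F := ⟨⟨Y0, hY0⟩⟩
  -- a surjection φ : α → F
  obtain ⟨emb⟩ := Cardinal.le_def _ _ |>.mp h
  set φ : α → ↥F := Function.invFun emb with hφdef
  have hφ : Function.Surjective φ := Function.invFun_surjective emb.injective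
  -- a well-order on α of type (#α).ord
  obtain ⟨r, wo, hr⟩ := Cardinal.ord_eq α
  -- an unbounded countable set, enumerated by ℕ
  obtain ⟨S, hSub, hScard⟩ : ∃ S : Set α, (∀ a, ∃ b ∈ S, ¬ r b a) ∧ #S = Ordinal.cof (Ordinal.type r) := by
    let := linearOrderOfSTO r
    have : WellFoundedLT α := wo.toIsWellFounded
    obtain ⟨s, hs, hs'⟩ := Order.exists_cof_eq α
    refine ⟨s, fun a => ?_, ?_⟩
    · obtain ⟨b, hb, hab⟩ := hs a
      exact ⟨b, hb, fun hba => (not_lt_of_ge hab) hba⟩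
    · rw [hs']; exact (Ordinal.cof_type α).symm
  rw [← hr, hcf] at hScard
  obtain ⟨e⟩ := Cardinal.lift_mk_eq'.mp (show Cardinal.lift.{0} #↥S = Cardinal.lift #ℕ by
    rw [hScard]; simp)
  replace e : ↥S ≃ ℕ := e
  set b : ℕ → α := fun n => (e.symm n : α) with hbdef
  -- the "small" pieces
  set A : ℕ → Set α := fun n => {y | ¬ r (b n) y} with hAdef
  have hA : ∀ n, #(A n) < #α := by
    intro n
    have hsub : A n ⊆ insert (b n) {y | r y (b n)} := by
      intro y hy
      rcases trichotomous_of r y (b n) with h1 | h1 | h1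
      · exact Set.mem_insert_iff.mpr (Or.inr h1)
      · exact h1 ▸ Set.mem_insert _ _
      · exact absurd h1 hy
    calc #(A n) ≤ #(insert (b n) {y | r y (b n)} : Set α) := mk_le_mk_of_subset hsub
      _ ≤ #{y | r y (b n)} + 1 := Cardinal.mk_insert_le
      _ < #α := by
          apply Cardinal.add_lt_of_lt hκ.le
          · have h2 : #{ y // r y (b n) } < #α := by
              rw [← Ordinal.card_typein]
              exact Cardinal.card_typein_lt (r := r) (b n) hr
            exact h2
          · exact lt_of_lt_of_le Cardinal.one_lt_aleph0 hκ.le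
  set U : ℕ → Set α := fun n => ⋃ x : A n, (φ x : Set α) with hUdef
  have hU : ∀ n, #(U n) < #α := by
    intro n
    refine lt_of_le_of_lt (Cardinal.mk_iUnion_le _) ?_
    refine Cardinal.mul_lt_of_lt hκ.le (hA n) (lt_of_le_of_lt ?_ hκ)
    refine ciSup_le' fun x => ?_
    exact Cardinal.mk_le_aleph0_iff.mpr ((hF _ (φ x).2).1.to_subtype
    )
  -- choose points avoiding U n and a finite set
  have key : ∀ (n : ℕ) (s : Finset α), ∃ y, y ∉ U n ∧ y ∉ s := by
    intro n s
    by_contra hc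
    push_neg at hc
    have huniv : (Set.univ : Set α) ⊆ U n ∪ ↑s := by
      intro y _
      by_cases hy : y ∈ U n
      · exact Or.inl hy
      · exact Or.inr (hc y hy)
    have : #α ≤ #(U n ∪ ↑s : Set α) := by
      simpa using mk_le_mk_of_subset huniv
    have hlt : #(U n ∪ ↑s : Set α) < #α :=
      lt_of_le_of_lt (Cardinal.mk_union_le _ _)
        (Cardinal.add_lt_of_lt hκ.le (hU n) (lt_trans s.finite_toSet.lt_aleph0 hκ))
    exact absurd this hlt.not_ge
  choose g hg1 hg2 using key
  -- recursively build an injective sequence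
  set L : ℕ → Finset α := fun n =>
    Nat.rec (motive := fun _ => Finset α) ∅ (fun m Lm => insert (g m Lm) Lm) n with hLdef
  set x : ℕ → α := fun n => g n (L n) with hxdef
  have hLsucc : ∀ n, L (n + 1) = insert (x n) (L n) := fun n => rfl
  have hmem : ∀ m n, m < n → x m ∈ L n := by
    intro m n
    induction n with
    | zero => omega
    | succ k ih =>
        intro hmk
        rw [hLsucc]
        rcases Nat.lt_succ_iff_lt_or_eq.mp hmk with h' | h'
        · exact Finset.mem_insert_of_mem (ih h')
        · subst h'; exact Finset.mem_insert_self _ _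
  have hinj : Function.Injective x := by
    intro m n hmn
    by_contra hne
    rcases Nat.lt_or_ge m n with h' | h'
    · have hm := hmem m n h'
      rw [hmn] at hm
      exact hg2 n (L n) hm
    · have h'' : n < m := lt_of_le_of_ne h' (Ne.symm hne)
      have hm := hmem n m h''
      rw [← hmn] at hm
      exact hg2 m (L m) hm
  -- the diagonal set
  obtain ⟨Y, hY, hXY⟩ := hcof (Set.range x) (Set.countable_range _)
    (Set.infinite_range_of_injective hinj)
  obtain ⟨a, ha⟩ := hφ ⟨Y, hY⟩
  obtain ⟨c, hcS, hca⟩ := hSub a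
  obtain ⟨n, hn⟩ : ∃ n, b n = c := ⟨e ⟨c, hcS⟩, by simp [hbdef]⟩
  have haA : a ∈ A n := by rw [hAdef]; simp only [Set.mem_setOf_eq, hn]; exact hca
  have hYU : Y ⊆ U n := by
    have : (φ a : Set α) ⊆ U n := Set.subset_iUnion (fun x : A n => (φ x : Set α)) ⟨a, haA⟩
    rwa [ha] at this
  exact hg1 n (L n) (hYU (hXY ⟨n, rfl⟩))
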